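/- (Positive energy on the Nehari manifold.) Let N ≥ 1, −1 < κ < 0, β > 0, μ₂ ≥ μ₁ > 0, and let C > 0 be a constant such that ∫w⁴ ≤ C(∫(|∇w|² + w²))² for every C¹ function w : ℝ^N → ℝ with w, ∇w ∈ L²(ℝ^N) and w⁴ integrable. If (u,v) is a pair of C¹ functions ℝ^N → ℝ with u, v, ∇u, ∇v ∈ L²(ℝ^N), u⁴ and v⁴ integrable, lying on the Nehari set, then I_{κ,β}(u,v) = ¼(‖u‖² + ‖v‖² + 2κ∫uv) and I_{κ,β}(u,v) ≥ (1+κ)²/(16C(μ₂+β)) > 0. -/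

import Mathlib

open MeasureTheory

/-- The squared H¹ norm `∫ (|∇w|² + w²)`. -/
noncomputable def H1sq {N : ℕ} (w : EuclideanSpace ℝ (Fin N) → ℝ) : ℝ :=
  ∫ x, (‖gradient w x‖ ^ 2 + w x ^ 2)

/-- The energy functional `I_{κ,β}`. -/
noncomputable def energy {N : ℕ} (μ₁ μ₂ κ β : ℝ)
    (u v : EuclideanSpace ℝ (Fin N) → ℝ) : ℝ :=
  (1 / 2) * (H1sq u + H1sq v) + κ * (∫ x, u x * v x)
    - (1 / 4) * (∫ x, (μ₁ * u x ^ 4 + μ₂ * v x ^ 4))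
    - (β / 2) * (∫ x, u x ^ 2 * v x ^ 2)

set_option maxHeartbeats 1000000 in
theorem stmt11 (N : ℕ) (hN : 1 ≤ N) (μ₁ μ₂ κ β C : ℝ)
    (hκ₁ : -1 < κ) (hκ₂ : κ < 0) (hβ : 0 < β) (hμ₁ : 0 < μ₁) (hμ₁₂ : μ₁ ≤ μ₂) (hC : 0 < C)
    (hSob : ∀ w : EuclideanSpace ℝ (Fin N) → ℝ, ContDiff ℝ 1 w →
      MemLp w 2 (volume : Measure (EuclideanSpace ℝ (Fin N))) →
      MemLp (fun x => gradient w x) 2 (volume : Measure (EuclideanSpace ℝ (Fin N))) →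
      Integrable (fun x => w x ^ 4) (volume : Measure (EuclideanSpace ℝ (Fin N))) →
      (∫ x, w x ^ 4) ≤ C * (H1sq w) ^ 2)
    (u v : EuclideanSpace ℝ (Fin N) → ℝ)
    (hu : ContDiff ℝ 1 u) (hv : ContDiff ℝ 1 v)
    (huL2 : MemLp u 2 (volume : Measure (EuclideanSpace ℝ (Fin N))))
    (hvL2 : MemLp v 2 (volume : Measure (EuclideanSpace ℝ (Fin N))))
    (hugL2 : MemLp (fun x => gradient u x) 2 (volume : Measure (EuclideanSpace ℝ (Fin N))))
    (hvgL2 : MemLp (fun x => gradient v x) 2 (volume : Measure (EuclideanSpace ℝ (Fin N))))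
    (hu4 : Integrable (fun x => u x ^ 4) (volume : Measure (EuclideanSpace ℝ (Fin N))))
    (hv4 : Integrable (fun x => v x ^ 4) (volume : Measure (EuclideanSpace ℝ (Fin N))))
    (hune : u ≠ 0) (hvne : v ≠ 0)
    (hNehari : H1sq u + H1sq v + 2 * κ * ∫ x, u x * v x =
      ∫ x, (μ₁ * u x ^ 4 + μ₂ * v x ^ 4 + 2 * β * u x ^ 2 * v x ^ 2)) :
    energy μ₁ μ₂ κ β u v = (1 / 4) * (H1sq u + H1sq v + 2 * κ * ∫ x, u x * v x) ∧
    energy μ₁ μ₂ κ β u v ≥ (1 + κ) ^ 2 / (16 * C * (μ₂ + β)) ∧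
    (0 : ℝ) < (1 + κ) ^ 2 / (16 * C * (μ₂ + β)) := by
  classical
  have hcu : Continuous u := hu.continuous
  have hcv : Continuous v := hv.continuous
  have i_u2 : Integrable (fun x => u x ^ 2) := huL2.integrable_sq
  have i_v2 : Integrable (fun x => v x ^ 2) := hvL2.integrable_sq
  have i_gu2 : Integrable (fun x => ‖gradient u x‖ ^ 2) := hugL2.norm.integrable_sq
  have i_gv2 : Integrable (fun x => ‖gradient v x‖ ^ 2) := hvgL2.norm.integrable_sq
  have i_uv : Integrable (fun x => u x * v x) := by
    refine ((i_u2.add i_v2).const_mul (1/2)).mono' ((hcu.mul hcv).aestronglyMeasurable) ?_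
    filter_upwards with x
    have h1 := sq_nonneg (u x - v x)
    have h2 := sq_nonneg (u x + v x)
    simp only [Pi.add_apply]
    rw [Real.norm_eq_abs, abs_le]
    constructor <;> nlinarith
  have i_u2v2 : Integrable (fun x => u x ^ 2 * v x ^ 2) := by
    refine ((hu4.add hv4).const_mul (1/2)).mono'
      (((hcu.pow 2).mul (hcv.pow 2)).aestronglyMeasurable) ?_
    filter_upwards with x
    have h := sq_nonneg (u x ^ 2 - v x ^ 2)
    simp only [Pi.add_apply]
    rw [Real.norm_eq_abs, abs_of_nonneg (by positivity)]
    nlinarith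
  have i_bu2v2 : Integrable (fun x => 2 * β * u x ^ 2 * v x ^ 2) := by
    have := i_u2v2.const_mul (2 * β)
    simpa [mul_assoc] using this
  have hAsplit : H1sq u = (∫ x, ‖gradient u x‖ ^ 2) + ∫ x, u x ^ 2 := by
    rw [H1sq, integral_add i_gu2 i_u2]
  have hBsplit : H1sq v = (∫ x, ‖gradient v x‖ ^ 2) + ∫ x, v x ^ 2 := by
    rw [H1sq, integral_add i_gv2 i_v2]
  have h_gu2_nn : 0 ≤ ∫ x, ‖gradient u x‖ ^ 2 := integral_nonneg fun x => by positivity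
  have h_gv2_nn : 0 ≤ ∫ x, ‖gradient v x‖ ^ 2 := integral_nonneg fun x => by positivity
  have h_u2_nn : 0 ≤ ∫ x, u x ^ 2 := integral_nonneg fun x => by positivity
  have h_v2_nn : 0 ≤ ∫ x, v x ^ 2 := integral_nonneg fun x => by positivity
  have h_u2_pos : 0 < ∫ x, u x ^ 2 := by
    rcases h_u2_nn.lt_or_eq with h | h
    · exact h
    · exfalso
      apply hune
      have h0 : (fun x => u x ^ 2) =ᵐ[volume] 0 :=
        (integral_eq_zero_iff_of_nonneg (fun x => by positivity) i_u2).mp h.symm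
      have h1 : u =ᵐ[volume] (0 : EuclideanSpace ℝ (Fin N) → ℝ) := by
        filter_upwards [h0] with x hx
        have hx' : u x ^ 2 = 0 := hx
        simpa using (pow_eq_zero_iff (n := 2) (by norm_num)).mp hx'
      exact (Continuous.ae_eq_iff_eq volume hcu continuous_const).mp h1
  have hCS : 2 * (∫ x, u x * v x) ≤ (∫ x, u x ^ 2) + ∫ x, v x ^ 2 := by
    have h1 : (∫ x, 2 * (u x * v x)) ≤ ∫ x, (u x ^ 2 + v x ^ 2) := by
      refine integral_mono (i_uv.const_mul 2) (i_u2.add i_v2) fun x => ?_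
      have := sq_nonneg (u x - v x); nlinarith
    rwa [integral_const_mul, integral_add i_u2 i_v2] at h1
  set A := H1sq u with hA
  set B := H1sq v with hB
  set P := ∫ x, u x * v x with hP
  set S := A + B + 2 * κ * P with hS
  have hκ0 : 0 < 1 + κ := by linarith
  -- lower bound on S
  have hSlow : (1 + κ) * (A + B) ≤ S := by
    have h1 : κ * ((∫ x, u x ^ 2) + ∫ x, v x ^ 2) ≤ 2 * κ * P := by
      have := mul_le_mul_of_nonpos_left hCS hκ₂.le
      linarith
    have h2 : κ * (A + B) ≤ κ * ((∫ x, u x ^ 2) + ∫ x, v x ^ 2) := by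
      apply mul_le_mul_of_nonpos_left _ hκ₂.le
      rw [hAsplit, hBsplit]; linarith
    rw [hS]; linarith
  -- upper bound on S
  have i_lhs : Integrable (fun x => μ₁ * u x ^ 4 + μ₂ * v x ^ 4 + 2 * β * u x ^ 2 * v x ^ 2) :=
    ((hu4.const_mul μ₁).add (hv4.const_mul μ₂)).add i_bu2v2
  have hSup : S ≤ (μ₂ + β) * ((∫ x, u x ^ 4) + ∫ x, v x ^ 4) := by
    have h1 : (∫ x, (μ₁ * u x ^ 4 + μ₂ * v x ^ 4 + 2 * β * u x ^ 2 * v x ^ 2)) ≤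
        ∫ x, (μ₂ + β) * (u x ^ 4 + v x ^ 4) := by
      refine integral_mono i_lhs ((hu4.add hv4).const_mul (μ₂ + β)) fun x => ?_
      have h2 := sq_nonneg (u x ^ 2 - v x ^ 2)
      have h4 : (0:ℝ) ≤ u x ^ 4 := by positivity
      have h5 : (0:ℝ) ≤ v x ^ 4 := by positivity
      nlinarith
    rw [integral_const_mul, integral_add hu4 hv4] at h1
    calc S = ∫ x, (μ₁ * u x ^ 4 + μ₂ * v x ^ 4 + 2 * β * u x ^ 2 * v x ^ 2) := hNehari
    _ ≤ _ := h1
  have hSobu := hSob u hu huL2 hugL2 hu4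
  have hSobv := hSob v hv hvL2 hvgL2 hv4
  rw [← hA] at hSobu
  rw [← hB] at hSobv
  have hApos : 0 < A := by rw [hAsplit]; linarith
  have hBnn : 0 ≤ B := by rw [hBsplit]; linarith
  have hu4nn : 0 ≤ ∫ x, u x ^ 4 := integral_nonneg fun x => by positivity
  have hv4nn : 0 ≤ ∫ x, v x ^ 4 := integral_nonneg fun x => by positivity
  have hμβ : 0 < μ₂ + β := by linarith
  -- chain the bounds
  have h1 : (∫ x, u x ^ 4) + ∫ x, v x ^ 4 ≤ C * (A + B) ^ 2 := by
    nlinarith [mul_nonneg hC.le (mul_nonneg hApos.le hBnn)]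
  have h2 : (μ₂ + β) * ((∫ x, u x ^ 4) + ∫ x, v x ^ 4) ≤ (μ₂ + β) * (C * (A + B) ^ 2) :=
    mul_le_mul_of_nonneg_left h1 hμβ.le
  have hchain : (1 + κ) * (A + B) ≤ (μ₂ + β) * C * (A + B) ^ 2 := by
    calc (1 + κ) * (A + B) ≤ S := hSlow
    _ ≤ (μ₂ + β) * ((∫ x, u x ^ 4) + ∫ x, v x ^ 4) := hSup
    _ ≤ (μ₂ + β) * (C * (A + B) ^ 2) := h2
    _ = (μ₂ + β) * C * (A + B) ^ 2 := by ring
  have htpos : 0 < A + B := by linarith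
  have htlb : (1 + κ) / ((μ₂ + β) * C) ≤ A + B := by
    rw [div_le_iff₀ (by positivity)]
    nlinarith
  have hSlb : (1 + κ) ^ 2 / ((μ₂ + β) * C) ≤ S := by
    have h3 : (1 + κ) * ((1 + κ) / ((μ₂ + β) * C)) ≤ (1 + κ) * (A + B) :=
      mul_le_mul_of_nonneg_left htlb hκ0.le
    calc (1 + κ) ^ 2 / ((μ₂ + β) * C) = (1 + κ) * ((1 + κ) / ((μ₂ + β) * C)) := by ring
    _ ≤ (1 + κ) * (A + B) := h3
    _ ≤ S := hSlow
  -- energy identity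
  have hsplit : (∫ x, (μ₁ * u x ^ 4 + μ₂ * v x ^ 4 + 2 * β * u x ^ 2 * v x ^ 2)) =
      (∫ x, (μ₁ * u x ^ 4 + μ₂ * v x ^ 4)) + 2 * β * ∫ x, u x ^ 2 * v x ^ 2 := by
    have i_Q : Integrable (fun x => μ₁ * u x ^ 4 + μ₂ * v x ^ 4) :=
      (hu4.const_mul μ₁).add (hv4.const_mul μ₂)
    rw [integral_add i_Q i_bu2v2]
    congr 1
    simp only [mul_assoc]
    rw [integral_const_mul, integral_const_mul]
  have hEeq : energy μ₁ μ₂ κ β u v = (1 / 4) * S := by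
    rw [energy, ← hA, ← hB, ← hP, hS]
    have hN' := hNehari
    rw [hsplit] at hN'
    rw [hS] at hN'
    linarith
  refine ⟨hEeq, ?_, by positivity⟩
  rw [hEeq]
  have hstep : (1 + κ) ^ 2 / (16 * C * (μ₂ + β)) ≤ (1/4) * ((1 + κ) ^ 2 / ((μ₂ + β) * C)) := by
    have hK0 : ((μ₂ + β) * C) ≠ 0 := by positivity
    have e : (1/4) * ((1 + κ) ^ 2 / ((μ₂ + β) * C)) = (1 + κ) ^ 2 / (4 * ((μ₂ + β) * C)) := by
      field_simp
    rw [e]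
    apply div_le_div_of_nonneg_left (sq_nonneg _) (by positivity)
    nlinarith [mul_pos hμβ hC]
  have : (1/4) * ((1 + κ) ^ 2 / ((μ₂ + β) * C)) ≤ (1/4) * S := by linarith
  linarith
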